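/- Let N be a positive natural number and let u be a real number with 0 < u and N·u ≥ 1. Then the minimum of Σ_{k=1}^N √(v_k), taken over all v : {1,…,N} → ℝ with 0 ≤ v_k ≤ u for every k and Σ_{k=1}^N v_k = 1, equals M·√u + √(1 − M·u), where M = ⌊1/u⌋ is the largest integer with M·u ≤ 1. (This is the value of the spectrum-estimation optimization problem when all the caps u_k are equal, as occurs for noisy linear cluster states.) -/
import Mathlib

open BigOperators Finset

noncomputable def gfun (u S : ℝ) : ℝ :=
  (⌊S / u⌋ : ℝ) * Real.sqrt u + Real.sqrt (S - (⌊S / u⌋ : ℝ) * u)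

lemma my_sqrt_add_le (x y : ℝ) (hx : 0 ≤ x) (hy : 0 ≤ y) :
    Real.sqrt (x + y) ≤ Real.sqrt x + Real.sqrt y := by
  have h1 := Real.sq_sqrt hx
  have h2 := Real.sq_sqrt hy
  have h3 := Real.sqrt_nonneg x
  have h4 := Real.sqrt_nonneg y
  have h : x + y ≤ (Real.sqrt x + Real.sqrt y) ^ 2 := by nlinarith [mul_nonneg h3 h4]
  calc Real.sqrt (x + y) ≤ Real.sqrt ((Real.sqrt x + Real.sqrt y) ^ 2) :=
        Real.sqrt_le_sqrt h
    _ = Real.sqrt x + Real.sqrt y := Real.sqrt_sq (by positivity)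

lemma gfun_key (u : ℝ) (hu : 0 < u) (a S : ℝ) (ha0 : 0 ≤ a) (hau : a ≤ u) (haS : a ≤ S) :
    gfun u S ≤ Real.sqrt a + gfun u (S - a) := by
  set m : ℤ := ⌊S / u⌋ with hm
  have hmu : (m : ℝ) * u ≤ S := by
    have h := Int.floor_le (S / u)
    rw [← hm] at h
    calc (m : ℝ) * u ≤ (S / u) * u := by nlinarith
      _ = S := div_mul_cancel₀ _ (ne_of_gt hu)
  have hSmu : S < ((m : ℝ) + 1) * u := by
    have h := Int.lt_floor_add_one (S / u)
    rw [← hm] at h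
    have h' : S / u < (m : ℝ) + 1 := by exact_mod_cast h
    calc S = (S / u) * u := (div_mul_cancel₀ _ (ne_of_gt hu)).symm
      _ < ((m : ℝ) + 1) * u := by nlinarith
  set r : ℝ := S - (m : ℝ) * u with hr
  have hr0 : 0 ≤ r := by simp [hr]; linarith
  have hru : r < u := by simp [hr]; nlinarith
  by_cases hc : a ≤ r
  · have hfloor : ⌊(S - a) / u⌋ = m := by
      rw [Int.floor_eq_iff]
      constructor
      · rw [le_div_iff₀ hu]; simp [hr] at hc; linarith
      · rw [div_lt_iff₀ hu]; push_cast; nlinarith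
    have hgoal : Real.sqrt r ≤ Real.sqrt a + Real.sqrt (r - a) := by
      have := my_sqrt_add_le a (r - a) ha0 (by linarith)
      simpa using this
    unfold gfun
    rw [hfloor, ← hm]
    have harg : S - a - (m : ℝ) * u = r - a := by simp [hr]; ring
    rw [harg]
    simp [hr] at hgoal ⊢
    linarith
  · push_neg at hc
    have hfloor : ⌊(S - a) / u⌋ = m - 1 := by
      rw [Int.floor_eq_iff]
      constructor
      · rw [le_div_iff₀ hu]; push_cast; nlinarith
      · rw [div_lt_iff₀ hu]; push_cast; simp [hr] at hc; nlinarith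
    set p := Real.sqrt u with hp
    set x := Real.sqrt a with hx
    set y := Real.sqrt r with hy
    set q := Real.sqrt (u + r - a) with hq
    have hp2 : p ^ 2 = u := Real.sq_sqrt hu.le
    have hx2 : x ^ 2 = a := Real.sq_sqrt ha0
    have hy2 : y ^ 2 = r := Real.sq_sqrt hr0
    have hq2 : q ^ 2 = u + r - a := Real.sq_sqrt (by linarith)
    have hyx : y ≤ x := Real.sqrt_le_sqrt hc.le
    have hxp : x ≤ p := Real.sqrt_le_sqrt hau
    have hyq : y ≤ q := Real.sqrt_le_sqrt (by linarith)
    have hqp : q ≤ p := Real.sqrt_le_sqrt (by linarith)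
    have hppos : 0 < p := Real.sqrt_pos.mpr hu
    have hx0 : 0 ≤ x := Real.sqrt_nonneg _
    have h1 : (p - x) * (p + x) = (q - y) * (q + y) := by nlinarith
    have h2 : (q - y) * (q + y) ≤ (q - y) * (p + x) :=
      mul_le_mul_of_nonneg_left (add_le_add hqp hyx) (by linarith)
    have h3 : p - x ≤ q - y :=
      le_of_mul_le_mul_right (by linarith) (by linarith : (0:ℝ) < p + x)
    have hkey : p + y ≤ x + q := by linarith
    unfold gfun
    rw [hfloor, ← hm]
    have harg : S - a - ((m : ℤ) - 1 : ℤ) * u = u + r - a := by push_cast; simp [hr]; ring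
    rw [harg]
    push_cast
    have hrarg : S - (m : ℝ) * u = r := by simp [hr]
    rw [hrarg]
    linarith
  done

lemma gfun_zero (u : ℝ) (hu : 0 < u) : gfun u 0 = 0 := by
  unfold gfun
  simp

lemma gfun_le_sum (u : ℝ) (hu : 0 < u) :
    ∀ (N : ℕ) (v : Fin N → ℝ), (∀ k, 0 ≤ v k ∧ v k ≤ u) →
      gfun u (∑ k, v k) ≤ ∑ k, Real.sqrt (v k) := by
  intro N
  induction N with
  | zero =>
      intro v _
      simp [gfun_zero u hu]
  | succ n ih =>
      intro v hv
      rw [Fin.sum_univ_succ, Fin.sum_univ_succ (fun i => Real.sqrt (v i))]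
      have htail : 0 ≤ ∑ i : Fin n, v i.succ :=
        Finset.sum_nonneg fun i _ => (hv i.succ).1
      have hkey := gfun_key u hu (v 0) (v 0 + ∑ i : Fin n, v i.succ)
        (hv 0).1 (hv 0).2 (by linarith)
      have harg : v 0 + (∑ i : Fin n, v i.succ) - v 0 = ∑ i : Fin n, v i.succ := by ring
      rw [harg] at hkey
      have := ih (fun i => v i.succ) (fun i => hv i.succ)
      calc gfun u (v 0 + ∑ i : Fin n, v i.succ)
          ≤ Real.sqrt (v 0) + gfun u (∑ i : Fin n, v i.succ) := hkey
        _ ≤ Real.sqrt (v 0) + ∑ i : Fin n, Real.sqrt (v i.succ) := by linarith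

lemma sum_caps (u r : ℝ) : ∀ (N m : ℕ), m ≤ N →
    ∑ k ∈ Finset.range N, (if k < m then u else if k = m then r else 0)
      = m * u + (if m < N then r else 0) := by
  intro N
  induction N with
  | zero =>
      intro m hm
      interval_cases m
      simp
  | succ n ih =>
      intro m hm
      rw [Finset.sum_range_succ]
      by_cases h : m ≤ n
      · rw [ih m h]
        by_cases h2 : m = n
        · subst h2
          simp [lt_irrefl, Nat.lt_succ_self]
        · have h3 : m < n := lt_of_le_of_ne h h2
          simp [h3, Nat.lt_succ_of_lt h3, not_lt.mpr h, Ne.symm h2]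
      · have hmn : m = n + 1 := le_antisymm hm (not_le.mp h)
        subst hmn
        have : ∀ k ∈ Finset.range n, (if k < n + 1 then u else if k = n + 1 then r else 0) = u := by
          intro k hk
          simp [Nat.lt_succ_of_lt (Finset.mem_range.mp hk)]
        rw [Finset.sum_congr rfl this]
        simp [Finset.sum_const]
        ring

theorem sqrt_sum_min_equal_caps (N : ℕ) (hN : 0 < N) (u : ℝ) (hu : 0 < u)
    (hNu : 1 ≤ (N : ℝ) * u) :
    IsLeast
      {t : ℝ | ∃ v : Fin N → ℝ, (∀ k, 0 ≤ v k ∧ v k ≤ u) ∧ (∑ k, v k) = 1 ∧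
        t = ∑ k, Real.sqrt (v k)}
      ((⌊1 / u⌋ : ℝ) * Real.sqrt u + Real.sqrt (1 - (⌊1 / u⌋ : ℝ) * u)) := by
  have hM0 : (0 : ℤ) ≤ ⌊1 / u⌋ := Int.floor_nonneg.mpr (by positivity)
  set M : ℤ := ⌊1 / u⌋ with hMdef
  set m : ℕ := M.toNat with hmdef
  have hmM : (m : ℝ) = (M : ℝ) := by
    rw [hmdef]; exact_mod_cast congrArg (Int.cast : ℤ → ℝ) (Int.toNat_of_nonneg hM0)
  have hMu1 : (M : ℝ) * u ≤ 1 := by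
    have h := Int.floor_le (1 / u)
    rw [← hMdef] at h
    calc (M : ℝ) * u ≤ (1 / u) * u := by nlinarith
      _ = 1 := by field_simp
  have h1Mu : 1 < ((M : ℝ) + 1) * u := by
    have h := Int.lt_floor_add_one (1 / u)
    rw [← hMdef] at h
    have h' : 1 / u < (M : ℝ) + 1 := by exact_mod_cast h
    calc (1 : ℝ) = (1 / u) * u := by field_simp
      _ < ((M : ℝ) + 1) * u := by nlinarith
  set r : ℝ := 1 - (M : ℝ) * u with hrdef
  have hr0 : 0 ≤ r := by simp [hrdef]; linarith
  have hru : r < u := by simp [hrdef]; nlinarith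
  have hmN : m ≤ N := by
    by_contra hcon
    push_neg at hcon
    have : (N : ℝ) < (m : ℝ) := by exact_mod_cast hcon
    rw [hmM] at this
    nlinarith
  constructor
  · -- membership
    set v : Fin N → ℝ := fun k => if (k : ℕ) < m then u else if (k : ℕ) = m then r else 0
      with hvdef
    refine ⟨v, ?_, ?_, ?_⟩
    · intro k
      simp only [hvdef]
      split_ifs with h1 h2
      · exact ⟨hu.le, le_refl u⟩
      · exact ⟨hr0, hru.le⟩
      · exact ⟨le_refl 0, hu.le⟩
    · -- sum = 1
      have hs : (∑ k, v k) = ∑ k ∈ Finset.range N,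
          (if k < m then u else if k = m then r else 0) := by
        rw [← Fin.sum_univ_eq_sum_range]
      rw [hs, sum_caps u r N m hmN]
      by_cases hcase : m < N
      · simp [hcase, hrdef, hmM]
      · have hmN' : m = N := le_antisymm hmN (not_lt.mp hcase)
        have hMN : (M : ℝ) = (N : ℝ) := by rw [← hmM, hmN']
        have hr0' : r = 0 := by
          have := hMu1
          rw [hMN] at this
          simp [hrdef, hMN]
          linarith
        simp [hcase]
        rw [hmM, hMN]
        simp [hrdef, hMN] at hr0'
        linarith
    · -- value
      have hsq : (∑ k, Real.sqrt (v k)) = ∑ k ∈ Finset.range N,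
          (if k < m then Real.sqrt u else if k = m then Real.sqrt r else 0) := by
        rw [← Fin.sum_univ_eq_sum_range]
        apply Finset.sum_congr rfl
        intro k _
        simp only [hvdef]
        split_ifs <;> simp
      rw [hsq, sum_caps (Real.sqrt u) (Real.sqrt r) N m hmN]
      by_cases hcase : m < N
      · simp [hcase, hmM, hrdef]
      · have hmN' : m = N := le_antisymm hmN (not_lt.mp hcase)
        have hMN : (M : ℝ) = (N : ℝ) := by rw [← hmM, hmN']
        have hr0' : r = 0 := by
          simp [hrdef, hMN]; rw [hMN] at hMu1; linarith
        simp [hcase, hmM]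
        rw [hr0', Real.sqrt_zero]
  · -- lower bound
    rintro t ⟨v, hv, hsum, ht⟩
    have h := gfun_le_sum u hu N v hv
    rw [hsum] at h
    have hg : gfun u 1 = (M : ℝ) * Real.sqrt u + Real.sqrt (1 - (M : ℝ) * u) := by
      have hfl : ⌊u⁻¹⌋ = M := by rw [hMdef, one_div]
      unfold gfun
      norm_num [hfl]
    rw [hg] at h
    rw [ht]
    exact h
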